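/- Let ρ be a density matrix on (ℂ²)^{⊗N} and H = Σ_{i<j} (p_{ij}/2)·[(I + s_{ij} X_i X_j)/2 + (I + s_{ij} Z_i Z_j)/2] with p_{ij} ≥ 0, Σ p_{ij} = 1, s_{ij} ∈ {±1}. Define the following experiment: choose h ∈ {0,1} uniformly; if h = 0 measure all qubits of ρ in the computational (Z) basis, if h = 1 in the Hadamard (X) basis, obtaining outcomes m₁,…,m_N ∈ {0,1}; sample (i,j) with probability p_{ij}; accept iff (−1)^{m_i}(−1)^{m_j} = −s_{ij}. Then the acceptance probability equals 1 − Tr(ρH). -/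
import Mathlib

open Matrix BigOperators
open scoped ComplexOrder

/-- The Pauli `X` matrix. -/
def Xmat : Matrix (Fin 2) (Fin 2) ℂ := !![0, 1; 1, 0]

/-- The Pauli `Z` matrix. -/
def Zmat : Matrix (Fin 2) (Fin 2) ℂ := !![1, 0; 0, -1]

/-- The Hadamard matrix on ℂ². -/
noncomputable def Hmat : Matrix (Fin 2) (Fin 2) ℂ :=
  (1 / (Real.sqrt 2 : ℂ)) • !![1, 1; 1, -1]

/-- The `N`-fold tensor power `H^{⊗N}` of the Hadamard matrix. -/
noncomputable def HN (N : ℕ) : Matrix (Fin N → Fin 2) (Fin N → Fin 2) ℂ :=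
  fun f g => ∏ j : Fin N, Hmat (f j) (g j)

/-- The single-qubit operator `M` acting on qubit `i`, identity elsewhere. -/
def pauliAt (N : ℕ) (i : Fin N) (M : Matrix (Fin 2) (Fin 2) ℂ) :
    Matrix (Fin N → Fin 2) (Fin N → Fin 2) ℂ :=
  fun f g => M (f i) (g i) * ∏ j ∈ Finset.univ.erase i, (if f j = g j then 1 else 0)

/-- The 2-local `XZ`-Hamiltonian
`H = Σ_{i<j} (p_{ij}/2)·[(I + s_{ij}X_iX_j)/2 + (I + s_{ij}Z_iZ_j)/2]`. -/
noncomputable def xzHam (N : ℕ) (p : Fin N → Fin N → ℝ) (s : Fin N → Fin N → ℝ) :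
    Matrix (Fin N → Fin 2) (Fin N → Fin 2) ℂ :=
  ∑ i : Fin N, ∑ j : Fin N,
    if i < j then
      ((p i j : ℂ) / 2) •
        ((1 / 2 : ℂ) • (1 + (s i j : ℂ) • (pauliAt N i Xmat * pauliAt N j Xmat)) +
         (1 / 2 : ℂ) • (1 + (s i j : ℂ) • (pauliAt N i Zmat * pauliAt N j Zmat)))
    else 0

/-! ### Auxiliary lemmas -/

lemma sqrt2_sq' : ((Real.sqrt 2 : ℂ))^2 = 2 := by
  rw [sq, ← Complex.ofReal_mul, Real.mul_self_sqrt (by norm_num)]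
  norm_num

lemma Hmat_mul_Hmat : Hmat * Hmat = 1 := by
  have h := sqrt2_sq'
  have h2 : (Real.sqrt 2 : ℂ) ≠ 0 := by
    intro hc
    rw [hc] at h; norm_num at h
  ext i j
  fin_cases i <;> fin_cases j <;>
      simp [Hmat, Matrix.mul_apply, Fin.sum_univ_two, Matrix.one_apply] <;>
    · field_simp
      first
      | linear_combination h
      | linear_combination (-2:ℂ) * h
      | (ring_nf; norm_num [sqrt2_sq'])

lemma Hmat_mul_Zmat : Hmat * Zmat = Xmat * Hmat := by
  ext i j
  fin_cases i <;> fin_cases j <;>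
    simp [Hmat, Xmat, Zmat, Matrix.mul_apply, Fin.sum_univ_two]

lemma sum_fun_prod {N : ℕ} (F : Fin N → Fin 2 → ℂ) :
    ∑ k : Fin N → Fin 2, ∏ j, F j (k j) = ∏ j, ∑ a, F j a := by
  rw [Finset.prod_univ_sum, Fintype.piFinset_univ]

lemma delta_prod {N : ℕ} (f g : Fin N → Fin 2) :
    (∏ j : Fin N, if f j = g j then (1:ℂ) else 0) = if f = g then 1 else 0 := by
  by_cases h : f = g
  · simp [h]
  · obtain ⟨j, hj⟩ := Function.ne_iff.mp h
    rw [if_neg h]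
    exact Finset.prod_eq_zero (Finset.mem_univ j) (if_neg hj)

lemma HN_mul_HN (N : ℕ) : HN N * HN N = 1 := by
  ext f g
  rw [Matrix.mul_apply]
  simp only [HN]
  calc ∑ k : Fin N → Fin 2, (∏ j, Hmat (f j) (k j)) * ∏ j, Hmat (k j) (g j)
      = ∑ k : Fin N → Fin 2, ∏ j, (Hmat (f j) (k j) * Hmat (k j) (g j)) := by
        simp [Finset.prod_mul_distrib]
    _ = ∏ j, ∑ a, Hmat (f j) a * Hmat a (g j) :=
        sum_fun_prod (fun j a => Hmat (f j) a * Hmat a (g j))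
    _ = ∏ j, (Hmat * Hmat) (f j) (g j) := by simp [Matrix.mul_apply]
    _ = (1 : Matrix (Fin N → Fin 2) (Fin N → Fin 2) ℂ) f g := by
        rw [Hmat_mul_Hmat]
        simp only [Matrix.one_apply]
        exact delta_prod f g

lemma HN_mul_pauliAt (N : ℕ) (i : Fin N) (M : Matrix (Fin 2) (Fin 2) ℂ)
    (f g : Fin N → Fin 2) :
    (HN N * pauliAt N i M) f g =
      (Hmat * M) (f i) (g i) * ∏ j ∈ Finset.univ.erase i, Hmat (f j) (g j) := by
  rw [Matrix.mul_apply]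
  simp only [HN, pauliAt]
  set F : Fin N → Fin 2 → ℂ := fun j a =>
    if j = i then Hmat (f j) a * M a (g i) else Hmat (f j) a * (if a = g j then 1 else 0)
    with hF
  have key : ∀ k : Fin N → Fin 2,
      (∏ j, Hmat (f j) (k j)) * (M (k i) (g i) * ∏ j ∈ Finset.univ.erase i,
        (if k j = g j then (1:ℂ) else 0)) = ∏ j, F j (k j) := by
    intro k
    rw [← Finset.mul_prod_erase Finset.univ (fun j => Hmat (f j) (k j)) (Finset.mem_univ i),
        ← Finset.mul_prod_erase Finset.univ (fun j => F j (k j)) (Finset.mem_univ i),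
        mul_mul_mul_comm, ← Finset.prod_mul_distrib]
    have h1 : F i (k i) = Hmat (f i) (k i) * M (k i) (g i) := by simp [hF]
    have h2 : ∀ j ∈ Finset.univ.erase i,
        Hmat (f j) (k j) * (if k j = g j then (1:ℂ) else 0) = F j (k j) := by
      intro j hj
      simp [hF, Finset.ne_of_mem_erase hj]
    rw [Finset.prod_congr rfl h2, h1]
  rw [Finset.sum_congr rfl (fun k _ => key k), sum_fun_prod F,
      ← Finset.mul_prod_erase Finset.univ (fun j => ∑ a, F j a) (Finset.mem_univ i)]
  congr 1
  · rw [Matrix.mul_apply]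
    apply Finset.sum_congr rfl
    intro a _
    simp [hF]
  · apply Finset.prod_congr rfl
    intro j hj
    have hji := Finset.ne_of_mem_erase hj
    simp [hF, hji]

lemma pauliAt_mul_HN (N : ℕ) (i : Fin N) (M : Matrix (Fin 2) (Fin 2) ℂ)
    (f g : Fin N → Fin 2) :
    (pauliAt N i M * HN N) f g =
      (M * Hmat) (f i) (g i) * ∏ j ∈ Finset.univ.erase i, Hmat (f j) (g j) := by
  rw [Matrix.mul_apply]
  simp only [HN, pauliAt]
  set F : Fin N → Fin 2 → ℂ := fun j a =>
    if j = i then M (f i) a * Hmat a (g i) else (if f j = a then 1 else 0) * Hmat a (g j)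
    with hF
  have key : ∀ k : Fin N → Fin 2,
      (M (f i) (k i) * ∏ j ∈ Finset.univ.erase i, (if f j = k j then (1:ℂ) else 0)) *
        (∏ j, Hmat (k j) (g j)) = ∏ j, F j (k j) := by
    intro k
    rw [← Finset.mul_prod_erase Finset.univ (fun j => Hmat (k j) (g j)) (Finset.mem_univ i),
        ← Finset.mul_prod_erase Finset.univ (fun j => F j (k j)) (Finset.mem_univ i),
        mul_mul_mul_comm, ← Finset.prod_mul_distrib]
    have h1 : F i (k i) = M (f i) (k i) * Hmat (k i) (g i) := by simp [hF]
    have h2 : ∀ j ∈ Finset.univ.erase i,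
        (if f j = k j then (1:ℂ) else 0) * Hmat (k j) (g j) = F j (k j) := by
      intro j hj
      simp [hF, Finset.ne_of_mem_erase hj]
    rw [Finset.prod_congr rfl h2, h1]
  rw [Finset.sum_congr rfl (fun k _ => key k), sum_fun_prod F,
      ← Finset.mul_prod_erase Finset.univ (fun j => ∑ a, F j a) (Finset.mem_univ i)]
  congr 1
  · rw [Matrix.mul_apply]
    apply Finset.sum_congr rfl
    intro a _
    simp [hF]
  · apply Finset.prod_congr rfl
    intro j hj
    have hji := Finset.ne_of_mem_erase hj
    simp [hF, hji, ite_mul, one_mul, zero_mul, Finset.sum_ite_eq]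

lemma HN_comm_Z (N : ℕ) (i : Fin N) :
    HN N * pauliAt N i Zmat = pauliAt N i Xmat * HN N := by
  ext f g
  rw [HN_mul_pauliAt, pauliAt_mul_HN, Hmat_mul_Zmat]

lemma XX_eq_conj (N : ℕ) (i j : Fin N) :
    pauliAt N i Xmat * pauliAt N j Xmat =
      HN N * (pauliAt N i Zmat * pauliAt N j Zmat) * HN N := by
  symm
  calc HN N * (pauliAt N i Zmat * pauliAt N j Zmat) * HN N
      = (HN N * pauliAt N i Zmat) * (pauliAt N j Zmat * HN N) := by
        simp only [Matrix.mul_assoc]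
    _ = (pauliAt N i Xmat * HN N) * (pauliAt N j Zmat * HN N) := by rw [HN_comm_Z]
    _ = pauliAt N i Xmat * ((HN N * pauliAt N j Zmat) * HN N) := by
        simp only [Matrix.mul_assoc]
    _ = pauliAt N i Xmat * ((pauliAt N j Xmat * HN N) * HN N) := by rw [HN_comm_Z]
    _ = pauliAt N i Xmat * pauliAt N j Xmat := by
        simp only [Matrix.mul_assoc, HN_mul_HN, Matrix.mul_one]

lemma pauliAt_Z_apply (N : ℕ) (i : Fin N) (f g : Fin N → Fin 2) :
    pauliAt N i Zmat f g = if f = g then ((-1 : ℂ)) ^ (f i : ℕ) else 0 := by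
  simp only [pauliAt]
  by_cases h : f = g
  · subst h
    rw [if_pos rfl]
    have h3 : (∏ j ∈ Finset.univ.erase i, if f j = f j then (1:ℂ) else 0) = 1 := by simp
    rw [h3, mul_one]
    obtain ⟨v, hv⟩ : ∃ v, f i = v := ⟨_, rfl⟩
    rw [hv]
    fin_cases v <;> simp [Zmat]
  · rw [if_neg h]
    obtain ⟨l, hl⟩ := Function.ne_iff.mp h
    by_cases hli : l = i
    · subst hli
      have h4 : Zmat (f l) (g l) = 0 := by
        obtain ⟨v, hv⟩ : ∃ v, f l = v := ⟨_, rfl⟩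
        obtain ⟨w, hw⟩ : ∃ w, g l = w := ⟨_, rfl⟩
        rw [hv, hw] at hl ⊢
        fin_cases v <;> fin_cases w <;> simp_all [Zmat]
      rw [h4, zero_mul]
    · have h5 : (∏ j ∈ Finset.univ.erase i, if f j = g j then (1:ℂ) else 0) = 0 :=
        Finset.prod_eq_zero (Finset.mem_erase.mpr ⟨hli, Finset.mem_univ l⟩)
          (if_neg hl : (if f l = g l then (1:ℂ) else 0) = 0)
      rw [h5, mul_zero]

lemma ZZ_apply (N : ℕ) (i j : Fin N) (f g : Fin N → Fin 2) :
    (pauliAt N i Zmat * pauliAt N j Zmat) f g =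
      if f = g then ((-1 : ℂ)) ^ (f i : ℕ) * ((-1 : ℂ)) ^ (f j : ℕ) else 0 := by
  rw [Matrix.mul_apply]
  calc ∑ k, pauliAt N i Zmat f k * pauliAt N j Zmat k g
      = ∑ k, (if f = k then ((-1:ℂ))^(f i : ℕ) *
          (if k = g then ((-1:ℂ))^(k j : ℕ) else 0) else 0) := by
        apply Finset.sum_congr rfl
        intro k _
        rw [pauliAt_Z_apply, pauliAt_Z_apply]
        split_ifs <;> ring
    _ = _ := by
        rw [Finset.sum_ite_eq Finset.univ f
          (fun k => ((-1:ℂ))^(f i : ℕ) * (if k = g then ((-1:ℂ))^(k j : ℕ) else 0))]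
        simp only [Finset.mem_univ, if_true]
        split_ifs <;> simp

lemma trace_mul_diag {I : Type*} [Fintype I] [DecidableEq I]
    (σ : Matrix I I ℂ) (c : I → ℂ)
    (D : Matrix I I ℂ) (hD : ∀ f g, D f g = if f = g then c f else 0) :
    (σ * D).trace = ∑ m, σ m m * c m := by
  simp only [Matrix.trace, Matrix.diag, Matrix.mul_apply, hD]
  apply Finset.sum_congr rfl
  intro m _
  rw [Finset.sum_congr rfl (fun k _ => by
    rw [show (if k = m then c k else 0) = if k = m then c m else 0 by
      split_ifs with h <;> simp [h]])]
  simp [Finset.sum_ite_eq', mul_ite]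

lemma HN_hermitian (N : ℕ) : (HN N)ᴴ = HN N := by
  ext f g
  simp only [Matrix.conjTranspose_apply, HN, Complex.star_def, map_prod]
  apply Finset.prod_congr rfl
  intro j _
  obtain ⟨v, hv⟩ : ∃ v, f j = v := ⟨_, rfl⟩
  obtain ⟨w, hw⟩ : ∃ w, g j = w := ⟨_, rfl⟩
  rw [hv, hw]
  fin_cases v <;> fin_cases w <;>
    simp [Hmat, map_div₀, Complex.conj_ofReal]

/-- indicator identity -/
lemma ind_identity {I : Type*} [Fintype I] (w c : I → ℝ) (p s : ℝ)
    (hw : ∑ m, w m = 1) (hs : s = 1 ∨ s = -1) (hc : ∀ m, c m = 1 ∨ c m = -1) :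
    ∑ m, w m * (p * (if c m = -s then 1 else 0)) =
      p / 2 * (1 - s * ∑ m, w m * c m) := by
  have key : ∀ m, w m * (p * (if c m = -s then 1 else 0)) =
      p / 2 * (w m - s * (w m * c m)) := by
    intro m
    rcases hs with h | h <;> rcases hc m with h' | h' <;>
      rw [h, h'] <;> norm_num <;> ring
  rw [Finset.sum_congr rfl (fun m _ => key m), ← Finset.mul_sum,
    Finset.sum_sub_distrib, ← Finset.mul_sum, hw]

/-- The acceptance probability of the posthoc verification experiment:
choose `h ∈ {0,1}` uniformly; measure all qubits of `ρ` in the computational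
basis if `h = 0` and in the Hadamard basis if `h = 1`, obtaining outcomes `m`;
sample `(i,j)` with probability `p_{ij}`; accept iff
`(−1)^{m_i}(−1)^{m_j} = −s_{ij}`.  It equals `1 − Tr(ρH)`. -/
theorem posthoc_acceptance_probability (N : ℕ)
    (ρ : Matrix (Fin N → Fin 2) (Fin N → Fin 2) ℂ)
    (hρ : ρ.PosSemidef) (hρtr : ρ.trace = 1)
    (p : Fin N → Fin N → ℝ) (s : Fin N → Fin N → ℝ)
    (hp : ∀ i j, 0 ≤ p i j)
    (hpsum : ∑ i : Fin N, ∑ j : Fin N, (if i < j then p i j else 0) = 1)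
    (hs : ∀ i j, s i j = 1 ∨ s i j = -1) :
    (1 / 2 : ℝ) * ∑ h : Fin 2, ∑ m : Fin N → Fin 2,
        (if h = 0 then (ρ m m).re else ((HN N * ρ * HN N) m m).re) *
          ∑ i : Fin N, ∑ j : Fin N,
            (if i < j then
              p i j * (if ((-1 : ℝ) ^ (m i : ℕ)) * ((-1 : ℝ) ^ (m j : ℕ)) = -(s i j) then 1 else 0)
            else 0)
      = 1 - (ρ * xzHam N p s).trace.re := by
  classical
  -- hermitian facts
  have hρherm : ∀ m, ρ m m = (((ρ m m).re : ℝ) : ℂ) := by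
    intro m
    have h := congrFun (congrFun hρ.1.symm m) m
    rw [Matrix.conjTranspose_apply] at h
    exact (Complex.conj_eq_iff_re.mp h.symm).symm
  have hσherm : ∀ m, (HN N * ρ * HN N) m m = ((((HN N * ρ * HN N) m m).re : ℝ) : ℂ) := by
    intro m
    have hs' : (HN N * ρ * HN N)ᴴ = HN N * ρ * HN N := by
      rw [Matrix.conjTranspose_mul, Matrix.conjTranspose_mul, HN_hermitian, hρ.1,
        Matrix.mul_assoc]
    have h := congrFun (congrFun hs'.symm m) m
    rw [Matrix.conjTranspose_apply] at h
    exact (Complex.conj_eq_iff_re.mp h.symm).symm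
  -- trace/normalization facts
  have hσtr : (HN N * ρ * HN N).trace = 1 := by
    rw [Matrix.trace_mul_cycle, HN_mul_HN, Matrix.one_mul, hρtr]
  have hw0sum : ∑ m, (ρ m m).re = 1 := by
    have h : (ρ.trace).re = 1 := by rw [hρtr]; norm_num
    rw [← h, Matrix.trace, Complex.re_sum]
    rfl
  have hw1sum : ∑ m, ((HN N * ρ * HN N) m m).re = 1 := by
    have h : ((HN N * ρ * HN N).trace).re = 1 := by rw [hσtr]; norm_num
    rw [← h, Matrix.trace, Complex.re_sum]
    rfl
  -- sign products are ±1
  have hcpm : ∀ (i j : Fin N) (m : Fin N → Fin 2),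
      ((-1 : ℝ) ^ (m i : ℕ)) * ((-1 : ℝ) ^ (m j : ℕ)) = 1 ∨
      ((-1 : ℝ) ^ (m i : ℕ)) * ((-1 : ℝ) ^ (m j : ℕ)) = -1 := by
    intro i j m
    rcases Nat.even_or_odd ((m i : ℕ) + (m j : ℕ)) with h | h
    · left; rw [← pow_add]; exact Even.neg_one_pow h
    · right; rw [← pow_add]; exact Odd.neg_one_pow h
  -- traces against ZZ and XX
  have hTZ : ∀ i j, (ρ * (pauliAt N i Zmat * pauliAt N j Zmat)).trace =
      ((∑ m, (ρ m m).re * (((-1 : ℝ) ^ (m i : ℕ)) * ((-1 : ℝ) ^ (m j : ℕ))) : ℝ) : ℂ) := by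
    intro i j
    rw [trace_mul_diag ρ (fun m => ((-1:ℂ))^(m i : ℕ) * ((-1:ℂ))^(m j : ℕ)) _
      (ZZ_apply N i j)]
    rw [Finset.sum_congr rfl (fun m _ => by rw [hρherm m])]
    push_cast
    apply Finset.sum_congr rfl
    intro m _
    ring
  have hTX : ∀ i j, (ρ * (pauliAt N i Xmat * pauliAt N j Xmat)).trace =
      ((∑ m, ((HN N * ρ * HN N) m m).re *
        (((-1 : ℝ) ^ (m i : ℕ)) * ((-1 : ℝ) ^ (m j : ℕ))) : ℝ) : ℂ) := by
    intro i j
    rw [XX_eq_conj]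
    have e1 : ρ * (HN N * (pauliAt N i Zmat * pauliAt N j Zmat) * HN N) =
        ρ * HN N * (pauliAt N i Zmat * pauliAt N j Zmat) * HN N := by
      simp only [Matrix.mul_assoc]
    rw [e1, Matrix.trace_mul_cycle]
    have e2 : HN N * (ρ * HN N) * (pauliAt N i Zmat * pauliAt N j Zmat) =
        (HN N * ρ * HN N) * (pauliAt N i Zmat * pauliAt N j Zmat) := by
      simp only [Matrix.mul_assoc]
    rw [e2, trace_mul_diag (HN N * ρ * HN N)
      (fun m => ((-1:ℂ))^(m i : ℕ) * ((-1:ℂ))^(m j : ℕ)) _ (ZZ_apply N i j)]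
    rw [Finset.sum_congr rfl (fun m _ => by rw [hσherm m])]
    push_cast
    apply Finset.sum_congr rfl
    intro m _
    ring
  -- the trace of ρ·H
  have hTrace : (ρ * xzHam N p s).trace =
      ((∑ i, ∑ j, if i < j then
        p i j / 2 * (1/2 * (1 + s i j * ∑ m, ((HN N * ρ * HN N) m m).re *
            (((-1 : ℝ) ^ (m i : ℕ)) * ((-1 : ℝ) ^ (m j : ℕ))))
          + 1/2 * (1 + s i j * ∑ m, (ρ m m).re *
            (((-1 : ℝ) ^ (m i : ℕ)) * ((-1 : ℝ) ^ (m j : ℕ))))) else 0 : ℝ) : ℂ) := by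
    simp only [xzHam, Finset.mul_sum, Matrix.trace_sum]
    push_cast
    apply Finset.sum_congr rfl
    intro i _
    apply Finset.sum_congr rfl
    intro j _
    by_cases hij : i < j
    · rw [if_pos hij, if_pos hij]
      simp only [Matrix.mul_smul, mul_add, Matrix.mul_one, Matrix.trace_add,
        Matrix.trace_smul, smul_eq_mul, hρtr, hTX, hTZ]
      push_cast
      simp only [Finset.mul_sum]
    · rw [if_neg hij, if_neg hij, Matrix.mul_zero, Matrix.trace_zero]
      norm_num
  rw [hTrace, Complex.ofReal_re]
  -- split the h-sum into the two bases
  rw [Fin.sum_univ_two]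
  simp only [show ((0 : Fin 2) = 0) = True by simp, show ((1 : Fin 2) = 0) = False by simp,
    if_true, if_false]
  -- the measurement identity for each basis
  have keyL : ∀ (w : (Fin N → Fin 2) → ℝ), (∑ m, w m = 1) →
      ∑ m, w m * (∑ i, ∑ j, (if i < j then
          p i j * (if ((-1 : ℝ) ^ (m i : ℕ)) * ((-1 : ℝ) ^ (m j : ℕ)) = -(s i j) then 1 else 0)
        else 0)) =
      ∑ i, ∑ j, (if i < j then p i j / 2 * (1 - s i j * ∑ m, w m *
        (((-1 : ℝ) ^ (m i : ℕ)) * ((-1 : ℝ) ^ (m j : ℕ)))) else 0) := by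
    intro w hw
    have step1 : ∀ m : Fin N → Fin 2, w m * (∑ i, ∑ j, (if i < j then
        p i j * (if ((-1 : ℝ) ^ (m i : ℕ)) * ((-1 : ℝ) ^ (m j : ℕ)) = -(s i j) then 1 else 0)
        else 0)) = ∑ i, ∑ j, w m * (if i < j then
        p i j * (if ((-1 : ℝ) ^ (m i : ℕ)) * ((-1 : ℝ) ^ (m j : ℕ)) = -(s i j) then 1 else 0)
        else 0) := by
      intro m
      rw [Finset.mul_sum]
      exact Finset.sum_congr rfl (fun i _ => by rw [Finset.mul_sum])
    rw [Finset.sum_congr rfl (fun m _ => step1 m), Finset.sum_comm]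
    apply Finset.sum_congr rfl
    intro i _
    rw [Finset.sum_comm]
    apply Finset.sum_congr rfl
    intro j _
    by_cases hij : i < j
    · simp only [if_pos hij]
      exact ind_identity w
        (fun m => ((-1 : ℝ) ^ (m i : ℕ)) * ((-1 : ℝ) ^ (m j : ℕ)))
        (p i j) (s i j) hw (hs i j) (hcpm i j)
    · simp only [if_neg hij, mul_zero, Finset.sum_const_zero]
  have key0 : ∑ m, (ρ m m).re * (∑ i, ∑ j, (if i < j then
        p i j * (if ((-1 : ℝ) ^ (m i : ℕ)) * ((-1 : ℝ) ^ (m j : ℕ)) = -(s i j) then 1 else 0)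
        else 0)) =
      ∑ i, ∑ j, (if i < j then p i j / 2 * (1 - s i j * ∑ m, (ρ m m).re *
        (((-1 : ℝ) ^ (m i : ℕ)) * ((-1 : ℝ) ^ (m j : ℕ)))) else 0) :=
    keyL (fun m => (ρ m m).re) hw0sum
  have key1 : ∑ m, ((HN N * ρ * HN N) m m).re * (∑ i, ∑ j, (if i < j then
        p i j * (if ((-1 : ℝ) ^ (m i : ℕ)) * ((-1 : ℝ) ^ (m j : ℕ)) = -(s i j) then 1 else 0)
        else 0)) =
      ∑ i, ∑ j, (if i < j then p i j / 2 * (1 - s i j * ∑ m, ((HN N * ρ * HN N) m m).re *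
        (((-1 : ℝ) ^ (m i : ℕ)) * ((-1 : ℝ) ^ (m j : ℕ)))) else 0) :=
    keyL (fun m => ((HN N * ρ * HN N) m m).re) hw1sum
  rw [key0, key1]
  -- final bookkeeping
  have h3 : ∀ i : Fin N,
      (1/2 : ℝ) * (∑ j, (if i < j then p i j / 2 * (1 - s i j * ∑ m, (ρ m m).re *
          (((-1 : ℝ) ^ (m i : ℕ)) * ((-1 : ℝ) ^ (m j : ℕ)))) else 0))
      + (1/2 : ℝ) * (∑ j, (if i < j then p i j / 2 * (1 - s i j * ∑ m, ((HN N * ρ * HN N) m m).re *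
          (((-1 : ℝ) ^ (m i : ℕ)) * ((-1 : ℝ) ^ (m j : ℕ)))) else 0))
      + ∑ j, (if i < j then
        p i j / 2 * (1/2 * (1 + s i j * ∑ m, ((HN N * ρ * HN N) m m).re *
            (((-1 : ℝ) ^ (m i : ℕ)) * ((-1 : ℝ) ^ (m j : ℕ))))
          + 1/2 * (1 + s i j * ∑ m, (ρ m m).re *
            (((-1 : ℝ) ^ (m i : ℕ)) * ((-1 : ℝ) ^ (m j : ℕ))))) else 0)
      = ∑ j, (if i < j then p i j else 0) := by
    intro i
    rw [Finset.mul_sum, Finset.mul_sum, ← Finset.sum_add_distrib, ← Finset.sum_add_distrib]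
    apply Finset.sum_congr rfl
    intro j _
    by_cases hij : i < j
    · simp only [if_pos hij]
      ring
    · simp only [if_neg hij]
      ring
  have h4 : (1/2 : ℝ) * (∑ i, ∑ j, (if i < j then p i j / 2 * (1 - s i j * ∑ m, (ρ m m).re *
          (((-1 : ℝ) ^ (m i : ℕ)) * ((-1 : ℝ) ^ (m j : ℕ)))) else 0))
      + (1/2 : ℝ) * (∑ i, ∑ j, (if i < j then p i j / 2 * (1 - s i j *
          ∑ m, ((HN N * ρ * HN N) m m).re *
          (((-1 : ℝ) ^ (m i : ℕ)) * ((-1 : ℝ) ^ (m j : ℕ)))) else 0))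
      + ∑ i, ∑ j, (if i < j then
        p i j / 2 * (1/2 * (1 + s i j * ∑ m, ((HN N * ρ * HN N) m m).re *
            (((-1 : ℝ) ^ (m i : ℕ)) * ((-1 : ℝ) ^ (m j : ℕ))))
          + 1/2 * (1 + s i j * ∑ m, (ρ m m).re *
            (((-1 : ℝ) ^ (m i : ℕ)) * ((-1 : ℝ) ^ (m j : ℕ))))) else 0)
      = 1 := by
    rw [Finset.mul_sum, Finset.mul_sum, ← Finset.sum_add_distrib, ← Finset.sum_add_distrib,
      Finset.sum_congr rfl (fun i _ => h3 i)]
    exact hpsum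
  linarith [h4]
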